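/- With F(K) = T*(2K+1) − (2K+1) ln K, one has F(K)/K → −∞ as K → +∞ (K ranging over the positive integers). -/

import Mathlib

open Filter Topology

/-- Legendre transform `T*(q) = sup_s (qs - T(s))`. -/
noncomputable def legendreTransform (T : ℝ → ℝ) (q : ℝ) : ℝ := ⨆ s : ℝ, (q * s - T s)

/-- `F(K) = T*(2K+1) - (2K+1) ln K`, where `T(s) = S(e^s)`. -/
noncomputable def Ffun (S : ℝ → ℝ) (K : ℕ) : ℝ :=
  legendreTransform (fun s => S (Real.exp s)) (2 * K + 1) - (2 * K + 1) * Real.log K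

set_option maxHeartbeats 1600000 in
/-- `F(K)/K → -∞` as `K → ∞` over the positive integers. -/
theorem F_div_K_tendsto_atBot
    (S : ℝ → ℝ) (hS : ContDiffOn ℝ 2 S (Set.Ioi 0))
    (hS' : ∀ t > 0, 0 ≤ deriv S t) (hS'' : ∀ t > 0, 0 ≤ deriv (deriv S) t)
    (hS'inf : Tendsto (deriv S) atTop atTop) :
    Tendsto (fun K : ℕ => Ffun S K / K) atTop atBot := by
  have hdiff : ∀ t : ℝ, 0 < t → DifferentiableAt ℝ S t := by
    intro t ht
    exact (hS.differentiableOn (by norm_num)).differentiableAt (Ioi_mem_nhds ht)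
  -- mean value theorem helper
  have hmvt : ∀ a b : ℝ, 0 < a → a < b →
      ∃ ξ ∈ Set.Ioo a b, deriv S ξ = (S b - S a) / (b - a) := by
    intro a b ha hab
    apply exists_deriv_eq_slope S hab
    · intro x hx
      exact (hdiff x (lt_of_lt_of_le ha hx.1)).continuousAt.continuousWithinAt
    · intro x hx
      exact (hdiff x (ha.trans hx.1)).differentiableWithinAt
  -- monotonicity of deriv S
  have hS1 : ContDiffOn ℝ 1 (deriv S) (Set.Ioi 0) := by
    apply hS.deriv_of_isOpen isOpen_Ioi
    norm_num
  have hmono : MonotoneOn (deriv S) (Set.Ioi 0) := by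
    apply monotoneOn_of_deriv_nonneg (convex_Ioi 0) hS1.continuousOn
    · rw [interior_Ioi]
      exact hS1.differentiableOn (by norm_num)
    · rw [interior_Ioi]
      exact fun x hx => hS'' x hx
  -- global lower bound for S
  set c₀ : ℝ := S 1 - deriv S 1 with hc₀
  have hlow : ∀ t : ℝ, 0 < t → c₀ ≤ S t := by
    intro t ht
    rcases lt_trichotomy t 1 with h | h | h
    · obtain ⟨ξ, hξ, hξeq⟩ := hmvt t 1 ht h
      have hξpos : 0 < ξ := ht.trans hξ.1
      have h1 : deriv S ξ ≤ deriv S 1 := hmono hξpos (by norm_num) hξ.2.le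
      have h2 : 0 ≤ deriv S ξ := hS' ξ hξpos
      have h3 : S 1 - S t = deriv S ξ * (1 - t) := by
        rw [hξeq, div_mul_cancel₀]
        exact sub_ne_zero.mpr (by linarith)
      nlinarith [hS' 1 one_pos]
    · simp [hc₀, h, hS' 1 one_pos]
    · obtain ⟨ξ, hξ, hξeq⟩ := hmvt 1 t one_pos h
      have hξpos : (0:ℝ) < ξ := lt_trans one_pos hξ.1
      have h2 : 0 ≤ deriv S ξ := hS' ξ hξpos
      have h3 : S t - S 1 = deriv S ξ * (t - 1) := by
        rw [hξeq, div_mul_cancel₀]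
        exact sub_ne_zero.mpr (by linarith)
      nlinarith [hS' 1 one_pos]
  rw [tendsto_atBot]
  intro b
  set M : ℝ := max 1 (-b) with hMdef
  have hM1 : (1:ℝ) ≤ M := le_max_left _ _
  have hM0 : (0:ℝ) < M := lt_of_lt_of_le one_pos hM1
  have hMb : -M ≤ b := by
    have := le_max_right 1 (-b)
    linarith
  set L : ℝ := 3 + 2 * M * Real.exp M with hLdef
  have hL3 : (3:ℝ) < L := by
    have := Real.exp_pos M
    nlinarith
  obtain ⟨A₀, hA₀⟩ := eventually_atTop.1 (hS'inf.eventually_ge_atTop L)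
  set A : ℝ := max A₀ 1 with hAdef
  have hA1 : (1:ℝ) ≤ A := le_max_right _ _
  have hA0 : (0:ℝ) < A := lt_of_lt_of_le one_pos hA1
  have hAL : ∀ u : ℝ, A ≤ u → L ≤ deriv S u := fun u hu =>
    hA₀ u (le_trans (le_max_left _ _) hu)
  -- linear lower bound for S above A
  have hAbnd : ∀ t : ℝ, A ≤ t → S A + L * (t - A) ≤ S t := by
    intro t htA
    rcases eq_or_lt_of_le htA with h | h
    · rw [← h]
      simp
    · obtain ⟨ξ, hξ, hξeq⟩ := hmvt A t hA0 h
      have h1 : L ≤ deriv S ξ := hAL ξ hξ.1.le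
      have h3 : S t - S A = deriv S ξ * (t - A) := by
        rw [hξeq, div_mul_cancel₀]
        exact sub_ne_zero.mpr (by linarith)
      nlinarith
  set C : ℝ := max (L * A - S A) (-c₀) with hCdef
  -- eventual bounds on K
  have hev : ∀ᶠ K : ℕ in atTop, (1:ℝ) ≤ K ∧ A * Real.exp M ≤ K ∧ C ≤ M * K := by
    have h1 : ∀ᶠ K : ℕ in atTop, (1:ℝ) ≤ K :=
      tendsto_natCast_atTop_atTop.eventually_ge_atTop 1
    have h2 : ∀ᶠ K : ℕ in atTop, A * Real.exp M ≤ (K:ℝ) :=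
      tendsto_natCast_atTop_atTop.eventually_ge_atTop _
    have h3 : ∀ᶠ K : ℕ in atTop, C / M ≤ (K:ℝ) :=
      tendsto_natCast_atTop_atTop.eventually_ge_atTop _
    filter_upwards [h1, h2, h3] with K hK1 hK2 hK3
    refine ⟨hK1, hK2, ?_⟩
    rw [div_le_iff₀ hM0] at hK3
    linarith
  filter_upwards [hev] with K ⟨hK1, hKA, hKC⟩
  have hKpos : (0:ℝ) < K := lt_of_lt_of_le one_pos hK1
  set q : ℝ := 2 * (K:ℝ) + 1 with hqdef
  have hq2 : 2 * (K:ℝ) ≤ q := by linarith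
  have hq3 : q ≤ 3 * (K:ℝ) := by linarith
  have hqpos : 0 < q := by linarith
  -- key bound on the Legendre transform
  have hsup : legendreTransform (fun s => S (Real.exp s)) q
      ≤ q * Real.log K - 2 * M * K + C := by
    apply ciSup_le
    intro s
    set t : ℝ := Real.exp s with htdef
    have ht0 : 0 < t := Real.exp_pos s
    rcases le_or_gt s (Real.log K - M) with hcase | hcase
    · -- small s
      have h1 : q * s ≤ q * (Real.log K - M) := by
        exact mul_le_mul_of_nonneg_left hcase hqpos.le
      have h2 : 2 * (K:ℝ) * M ≤ q * M := by nlinarith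
      have h3 : c₀ ≤ S t := hlow t ht0
      have h4 : -c₀ ≤ C := le_max_right _ _
      simp only []
      nlinarith
    · -- large s
      have htK : K * Real.exp (-M) ≤ t := by
        rw [htdef]
        calc K * Real.exp (-M) = Real.exp (Real.log K - M) := by
              rw [Real.exp_sub, Real.exp_log hKpos, Real.exp_neg, div_eq_mul_inv]
          _ ≤ Real.exp s := Real.exp_le_exp.2 hcase.le
      have hme : Real.exp M * Real.exp (-M) = 1 := by
        rw [← Real.exp_add]; simp
      have hAt : A ≤ t := by
        have h5 : A * Real.exp M * Real.exp (-M) ≤ K * Real.exp (-M) :=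
          mul_le_mul_of_nonneg_right hKA (Real.exp_pos _).le
        rw [mul_assoc, hme, mul_one] at h5
        linarith
      have hSt : S A + L * (t - A) ≤ S t := hAbnd t hAt
      have hqu : q * (s - Real.log K) ≤ 3 * t := by
        have hKu : (K:ℝ) * (s - Real.log K) ≤ t := by
          have h1 : (s - Real.log K) + 1 ≤ Real.exp (s - Real.log K) :=
            Real.add_one_le_exp _
          have h2 : Real.exp (s - Real.log K) * K = t := by
            rw [Real.exp_sub, Real.exp_log hKpos, div_mul_cancel₀]
            exact ne_of_gt hKpos
          nlinarith
        rcases le_or_gt (s - Real.log K) 0 with h | h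
        · nlinarith
        · nlinarith
      have hC1 : L * A - S A ≤ C := le_max_left _ _
      simp only []
      have key : q * s - S t ≤ q * Real.log K + (3 - L) * t + C := by nlinarith
      have h7 : (3 - L) * t ≤ (3 - L) * (K * Real.exp (-M)) :=
        mul_le_mul_of_nonpos_left htK (by linarith)
      have h8 : (3 - L) * ((K:ℝ) * Real.exp (-M)) = -(2 * M * (K:ℝ)) := by
        rw [hLdef]
        linear_combination (-(2 * M * (K:ℝ))) * hme
      linarith
  -- conclude
  have hF : Ffun S K ≤ -(M * K) := by
    have heq : Ffun S K = legendreTransform (fun s => S (Real.exp s)) q - q * Real.log K := by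
      rw [hqdef]; rfl
    rw [heq]
    linarith
  rw [div_le_iff₀ hKpos]
  calc Ffun S K ≤ -(M*K) := hF
    _ = -M * K := by ring
    _ ≤ b * K := by
      apply mul_le_mul_of_nonneg_right hMb hKpos.le
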